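/- The history in which process 1 executes I(1), D(2) then infinitely many reads returning {1,2}, and process 2 executes I(2), D(1) then infinitely many reads returning {1,2}, is not update consistent for the set UQ-ADT: there is no finite set of queries whose removal leaves a linearization recognized by the set specification. -/
import Mathlib


/-- An update-query abstract data type. -/
structure UQADT (U Qi Qo S : Type*) where
  s0 : S
  T : S → U → S
  G : S → Qi → Qo

/-- A distributed history: events labelled by updates or queries, with a program order. -/
structure Hist (U Qi Qo E : Type*) where
  lab : E → U ⊕ (Qi × Qo)
  po : E → E → Prop

variable {U Qi Qo S E : Type*}

def Hist.upd (h : Hist U Qi Qo E) : Set E := {e | ∃ u, h.lab e = Sum.inl u}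
def Hist.qry (h : Hist U Qi Qo E) : Set E := {e | ∃ q, h.lab e = Sum.inr q}

/-- `w` is an enumeration (an initial segment of `ℕ`, possibly finite) of the
set `F` of events, compatible with the relation `r`. -/
def IsLinz (r : E → E → Prop) (F : Set E) (w : ℕ → Option E) : Prop :=
  (∀ i j a, w i = some a → w j = some a → i = j) ∧
  (∀ a ∈ F, ∃ i, w i = some a) ∧
  (∀ i a, w i = some a → a ∈ F) ∧
  (∀ i j a b, i < j → w i = some a → w j = some b → ¬ r b a) ∧
  (∀ i j, i ≤ j → w j ≠ none → w i ≠ none)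

/-- The sequential word read off along `w` is recognized by `O`. -/
def Recog (O : UQADT U Qi Qo S) (h : Hist U Qi Qo E) (w : ℕ → Option E) : Prop :=
  ∃ st : ℕ → S, st 0 = O.s0 ∧ ∀ i,
    match w i with
    | none => st (i+1) = st i
    | some e =>
      match h.lab e with
      | Sum.inl u => st (i+1) = O.T (st i) u
      | Sum.inr (qi, qo) => st (i+1) = st i ∧ O.G (st i) qi = qo

/-- Eventual consistency. -/
def EC (O : UQADT U Qi Qo S) (h : Hist U Qi Qo E) : Prop :=
  h.upd.Infinite ∨ ∃ s : S,
    {e : E | ∃ qi qo, h.lab e = Sum.inr (qi, qo) ∧ O.G s qi ≠ qo}.Finite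

/-- Update consistency. -/
def UC (O : UQADT U Qi Qo S) (h : Hist U Qi Qo E) : Prop :=
  h.upd.Infinite ∨ ∃ Q' : Set E, Q' ⊆ h.qry ∧ Q'.Finite ∧
    ∃ w, IsLinz h.po Q'ᶜ w ∧ Recog O h w

/-- A reflexive relation is acyclic if its strict part has no cycles. -/
def Acyclic (r : E → E → Prop) : Prop :=
  ∀ e, ¬ Relation.TransGen (fun a b => r a b ∧ a ≠ b) e e

/-- Strong update consistency. -/
def SUC (O : UQADT U Qi Qo S) (h : Hist U Qi Qo E) : Prop :=
  ∃ vis le : E → E → Prop,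
    (∀ e, vis e e) ∧ Acyclic vis ∧
    (∀ e e', h.po e e' → vis e e') ∧
    (∀ u ∈ h.upd, {e | ¬ vis u e}.Finite) ∧
    (∀ e e' e'', vis e e' → h.po e' e'' → vis e e'') ∧
    IsLinearOrder E le ∧ (∀ e e', vis e e' → le e e') ∧
    (∀ q ∈ h.qry, ∃ w,
      IsLinz (fun a b => le a b ∧ a ≠ b) ({u | u ∈ h.upd ∧ vis u q} ∪ {q}) w ∧
      Recog O h w)

/-- Strong eventual consistency. -/
def SEC (O : UQADT U Qi Qo S) (h : Hist U Qi Qo E) : Prop :=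
  ∃ vis : E → E → Prop,
    (∀ e, vis e e) ∧ Acyclic vis ∧
    (∀ e e', h.po e e' → vis e e') ∧
    (∀ u ∈ h.upd, {e | ¬ vis u e}.Finite) ∧
    (∀ e e' e'', vis e e' → h.po e' e'' → vis e e'') ∧
    ∀ V ⊆ h.upd, ∃ s : S, ∀ e qi qo, h.lab e = Sum.inr (qi, qo) →
      {u | u ∈ h.upd ∧ vis u e} = V → O.G s qi = qo

/-- Update operations on the shared set: insertion and deletion. -/
inductive SOp where
  | I : ℕ → SOp
  | D : ℕ → SOp
deriving DecidableEq

/-- Transition function of the set UQ-ADT. -/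
def applyU (s : Finset ℕ) : SOp → Finset ℕ
  | .I v => insert v s
  | .D v => s.erase v

/-- The set UQ-ADT over support ℕ. -/
def setO : UQADT SOp Unit (Finset ℕ) (Finset ℕ) where
  s0 := ∅
  T := applyU
  G := fun s _ => s

/-- The history of Fig. 2(b): process `false` does I(1), D(2) then reads {1,2}
forever; process `true` does I(2), D(1) then reads {1,2} forever. -/
def H6 : Hist SOp Unit (Finset ℕ) (Bool × ℕ) where
  lab := fun e =>
    match e with
    | (false, 0) => Sum.inl (SOp.I 1)
    | (false, 1) => Sum.inl (SOp.D 2)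
    | (true, 0) => Sum.inl (SOp.I 2)
    | (true, 1) => Sum.inl (SOp.D 1)
    | (_, _) => Sum.inr ((), {1, 2})
  po := fun e e' => e.1 = e'.1 ∧ e.2 < e'.2

lemma H6_lab_big (b : Bool) (n : ℕ) : H6.lab (b, n + 2) = Sum.inr ((), ({1, 2} : Finset ℕ)) := by
  cases b <;> rfl

lemma H6_finite_upd : H6.upd.Finite := by
  apply Set.Finite.subset (Set.toFinite ({(false,0),(false,1),(true,0),(true,1)} : Set (Bool × ℕ)))
  rintro ⟨b, n⟩ ⟨u, hu⟩
  match b, n with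
  | false, 0 => simp
  | false, 1 => simp
  | true, 0 => simp
  | true, 1 => simp
  | b, (n+2) => rw [H6_lab_big] at hu; exact absurd hu (by simp)

/-- the history `H6` is not update consistent for the set. -/
theorem stmt6 : ¬ UC setO H6 := by
  rintro (hinf | ⟨Q', hQsub, hQfin, w, ⟨hinj, hsur, hmem, hord, hgap⟩, st, hst0, hstep⟩)
  · exact hinf H6_finite_upd
  · -- the four update events are in Q'ᶜ
    have hupd : ∀ e : Bool × ℕ, (∃ u, H6.lab e = Sum.inl u) → e ∈ Q'ᶜ := by
      rintro e ⟨u, hu⟩ he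
      obtain ⟨q, hq⟩ := hQsub he
      rw [hu] at hq; exact absurd hq (by simp)
    obtain ⟨i1, hw1⟩ := hsur (false, 0) (hupd _ ⟨_, rfl⟩)
    obtain ⟨i2, hw2⟩ := hsur (false, 1) (hupd _ ⟨_, rfl⟩)
    obtain ⟨i3, hw3⟩ := hsur (true, 0) (hupd _ ⟨_, rfl⟩)
    obtain ⟨i4, hw4⟩ := hsur (true, 1) (hupd _ ⟨_, rfl⟩)
    have h12 : i1 < i2 := by
      rcases lt_trichotomy i1 i2 with h | h | h
      · exact h
      · rw [h, hw2] at hw1; simp at hw1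
      · exact absurd ⟨rfl, Nat.zero_lt_one⟩ (hord i2 i1 _ _ h hw2 hw1)
    have h34 : i3 < i4 := by
      rcases lt_trichotomy i3 i4 with h | h | h
      · exact h
      · rw [h, hw4] at hw3; simp at hw3
      · exact absurd ⟨rfl, Nat.zero_lt_one⟩ (hord i4 i3 _ _ h hw4 hw3)
    set k := max i2 i4 with hk
    have hm2 : i2 ≤ k := le_max_left _ _
    have hm4 : i4 ≤ k := le_max_right _ _
    -- w (k+1) is not none, since Q'ᶜ is infinite
    have hinfc : (Q'ᶜ : Set (Bool × ℕ)).Infinite := hQfin.infinite_compl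
    have hbig : ∃ j, k + 1 ≤ j ∧ w j ≠ none := by
      by_contra hcon
      push_neg at hcon
      apply hinfc
      apply Set.Finite.subset ((Set.finite_Iio (k+1)).image (fun i => (w i).getD (false, 0)))
      intro a ha
      obtain ⟨i, hi⟩ := hsur a ha
      refine ⟨i, ?_, by simp [hi]⟩
      simp only [Set.mem_Iio]
      by_contra hik
      push_neg at hik
      exact absurd (hcon i hik) (by rw [hi]; simp)
    obtain ⟨j, hj1, hj2⟩ := hbig
    have hwk : w (k+1) ≠ none := hgap (k+1) j hj1 hj2
    obtain ⟨e, he⟩ := Option.ne_none_iff_exists'.mp hwk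
    -- e is a query event
    have hne : ∀ i0 a, w i0 = some a → i0 ≤ k → e ≠ a := by
      rintro i0 a hwa hle rfl
      have := hinj _ _ _ he hwa
      omega
    have hlabe : H6.lab e = Sum.inr ((), ({1,2} : Finset ℕ)) := by
      obtain ⟨b, n⟩ := e
      match b, n with
      | false, 0 => exact absurd rfl (hne i1 _ hw1 (by omega))
      | false, 1 => exact absurd rfl (hne i2 _ hw2 (by omega))
      | true, 0 => exact absurd rfl (hne i3 _ hw3 (by omega))
      | true, 1 => exact absurd rfl (hne i4 _ hw4 (by omega))
      | b, (n+2) => exact H6_lab_big b n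
    have hq : st (k+1+1) = st (k+1) ∧ setO.G (st (k+1)) () = ({1,2} : Finset ℕ) := by
      have h := hstep (k+1)
      rw [he] at h
      simp only at h
      rw [hlabe] at h
      exact h
    have hst12 : st (k+1) = ({1,2} : Finset ℕ) := hq.2
    have hii : i2 ≠ i4 := by
      rintro rfl; rw [hw2] at hw4; simp at hw4
    rcases Nat.lt_or_ge i2 i4 with hlt | hge
    · -- last update is D 1 at i4 = k
      have hk4 : k = i4 := by omega
      have hq4 := hstep i4
      rw [hw4] at hq4
      have : st (i4 + 1) = (st i4).erase 1 := hq4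
      rw [← hk4, hst12] at this
      have h1 : (1 : ℕ) ∈ ({1,2} : Finset ℕ) := by decide
      rw [this] at h1
      exact absurd h1 (Finset.notMem_erase 1 _)
    · -- last update is D 2 at i2 = k
      have hk2 : k = i2 := by omega
      have hq2 := hstep i2
      rw [hw2] at hq2
      have : st (i2 + 1) = (st i2).erase 2 := hq2
      rw [← hk2, hst12] at this
      have h2 : (2 : ℕ) ∈ ({1,2} : Finset ℕ) := by decide
      rw [this] at h2
      exact absurd h2 (Finset.notMem_erase 2 _)
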